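/- For every a ∈ ℝ, ∫_0^∞ ( e^{−(x−a)²/2} + e^{−(x+a)²/2} − 2 e^{−x²/2} ) · Erf(x/√2) dx = √2 · ∫_0^∞ e^{−t²} ( 2 Erf(t) − Erf(t − a/√2) − Erf(t + a/√2) ) dt. -/

import Mathlib

open MeasureTheory

/-- The Gauss error function `Erf(t) = (2/√π) ∫_0^t e^{-u²} du`
(automatically odd: `Erf(-t) = -Erf(t)`). -/
noncomputable def erf (t : ℝ) : ℝ := (2 / Real.sqrt Real.pi) * ∫ u in (0:ℝ)..t, Real.exp (-u ^ 2)

lemma gauss_cont : Continuous (fun u : ℝ => Real.exp (-u ^ 2)) := by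
  continuity

lemma gauss_integrable : Integrable (fun u : ℝ => Real.exp (-u ^ 2)) := by
  have := integrable_exp_neg_mul_sq (b := 1) one_pos
  simpa using this

lemma gauss_shift_integrable (c : ℝ) :
    Integrable (fun u : ℝ => Real.exp (-(u - c) ^ 2)) :=
  gauss_integrable.comp_sub_right c

lemma erf_hasDerivAt (t : ℝ) :
    HasDerivAt erf ((2 / Real.sqrt Real.pi) * Real.exp (-t ^ 2)) t := by
  have h := (gauss_cont.integral_hasStrictDerivAt 0 t).hasDerivAt
  exact h.const_mul (2 / Real.sqrt Real.pi)

lemma erf_continuous : Continuous erf := by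
  apply continuous_iff_continuousAt.2
  exact fun t => (erf_hasDerivAt t).continuousAt

lemma erf_zero : erf 0 = 0 := by simp [erf]

lemma erf_bound (t : ℝ) : |erf t| ≤ (2 / Real.sqrt Real.pi) * ∫ u : ℝ, Real.exp (-u ^ 2) := by
  have h1 : |∫ u in (0:ℝ)..t, Real.exp (-u ^ 2)| ≤ ∫ u in Set.uIoc 0 t, Real.exp (-u ^ 2) := by
    have := intervalIntegral.norm_integral_le_integral_norm_uIoc
      (f := fun u : ℝ => Real.exp (-u ^ 2)) (a := 0) (b := t) (μ := volume)
    simpa [Real.norm_eq_abs, abs_of_nonneg (Real.exp_nonneg _)] using this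
  have h2 : ∫ u in Set.uIoc 0 t, Real.exp (-u ^ 2) ≤ ∫ u : ℝ, Real.exp (-u ^ 2) :=
    setIntegral_le_integral gauss_integrable
      (Filter.Eventually.of_forall fun u => Real.exp_nonneg _)
  have hc : (0:ℝ) ≤ 2 / Real.sqrt Real.pi := by positivity
  calc |erf t| = (2 / Real.sqrt Real.pi) * |∫ u in (0:ℝ)..t, Real.exp (-u ^ 2)| := by
        rw [erf, abs_mul, abs_of_nonneg hc]
    _ ≤ (2 / Real.sqrt Real.pi) * ∫ u : ℝ, Real.exp (-u ^ 2) := by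
        exact mul_le_mul_of_nonneg_left (h1.trans h2) hc

lemma erf_tendsto :
    Filter.Tendsto erf Filter.atTop
      (nhds ((2 / Real.sqrt Real.pi) * ∫ u in Set.Ioi (0:ℝ), Real.exp (-u ^ 2))) := by
  have h := intervalIntegral_tendsto_integral_Ioi (0:ℝ)
    (gauss_integrable.integrableOn) Filter.tendsto_id
  exact (h.const_mul (2 / Real.sqrt Real.pi))

lemma erf_shift_tendsto (c : ℝ) :
    Filter.Tendsto (fun t => erf (t + c)) Filter.atTop
      (nhds ((2 / Real.sqrt Real.pi) * ∫ u in Set.Ioi (0:ℝ), Real.exp (-u ^ 2))) :=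
  erf_tendsto.comp (Filter.tendsto_atTop_add_const_right _ c Filter.tendsto_id)

/-- bounded measurable times integrable -/
lemma bdd_mul_gauss_integrableOn (f : ℝ → ℝ) (hf : Continuous f) (C : ℝ)
    (hC : ∀ x, |f x| ≤ C) (c : ℝ) :
    IntegrableOn (fun t => f t * Real.exp (-(t - c) ^ 2)) (Set.Ioi (0:ℝ)) := by
  have : Integrable (fun t => f t * Real.exp (-(t - c) ^ 2)) :=
    (gauss_shift_integrable c).bdd_mul (c := C) hf.aestronglyMeasurable
      (Filter.Eventually.of_forall fun x => by
      simpa [Real.norm_eq_abs] using hC x)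
  exact this.integrableOn

lemma key (b : ℝ) :
    ∫ t in Set.Ioi (0:ℝ),
        (Real.exp (-(t - b) ^ 2) + Real.exp (-(t + b) ^ 2) - 2 * Real.exp (-t ^ 2)) * erf t
      = ∫ t in Set.Ioi (0:ℝ),
          Real.exp (-t ^ 2) * (2 * erf t - erf (t - b) - erf (t + b)) := by
  set c : ℝ := 2 / Real.sqrt Real.pi with hc
  have hπ : Real.sqrt Real.pi ≠ 0 := by positivity
  have hcne : c ≠ 0 := by positivity
  -- the antiderivative
  set F : ℝ → ℝ := fun t => (1 / c) * (erf t * (2 * erf t - erf (t - b) - erf (t + b))) with hF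
  set f1 : ℝ → ℝ := fun t =>
    (Real.exp (-(t - b) ^ 2) + Real.exp (-(t + b) ^ 2) - 2 * Real.exp (-t ^ 2)) * erf t with hf1
  set f2 : ℝ → ℝ := fun t =>
    Real.exp (-t ^ 2) * (2 * erf t - erf (t - b) - erf (t + b)) with hf2
  have hderiv : ∀ t : ℝ, HasDerivAt F (f2 t - f1 t) t := by
    intro t
    have h0 : HasDerivAt erf (c * Real.exp (-t ^ 2)) t := erf_hasDerivAt t
    have hm : HasDerivAt (fun t : ℝ => erf (t - b)) (c * Real.exp (-(t - b) ^ 2)) t := by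
      have := (erf_hasDerivAt (t - b)).comp t ((hasDerivAt_id t).sub_const b)
      simpa [Function.comp_def, hc] using this
    have hp : HasDerivAt (fun t : ℝ => erf (t + b)) (c * Real.exp (-(t + b) ^ 2)) t := by
      have := (erf_hasDerivAt (t + b)).comp t ((hasDerivAt_id t).add_const b)
      simpa [Function.comp_def, hc] using this
    have hinner : HasDerivAt (fun t => erf t * (2 * erf t - erf (t - b) - erf (t + b)))
        ((c * Real.exp (-t ^ 2)) * (2 * erf t - erf (t - b) - erf (t + b))
          + erf t * (2 * (c * Real.exp (-t ^ 2)) - c * Real.exp (-(t - b) ^ 2)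
            - c * Real.exp (-(t + b) ^ 2))) t := by
      exact h0.mul (((h0.const_mul 2).sub hm).sub hp)
    have := hinner.const_mul (1 / c)
    refine this.congr_deriv ?_
    rw [hf1, hf2]
    field_simp
    ring
  have hint1 : IntegrableOn f1 (Set.Ioi (0:ℝ)) := by
    set M : ℝ := c * ∫ u : ℝ, Real.exp (-u ^ 2) with hM
    have h1 := bdd_mul_gauss_integrableOn erf erf_continuous M erf_bound b
    have h2 := bdd_mul_gauss_integrableOn erf erf_continuous M erf_bound (-b)
    have h3 := bdd_mul_gauss_integrableOn (fun t => 2 * erf t) (continuous_const.mul erf_continuous) (2 * M)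
      (fun x => by
        rw [abs_mul, abs_two]
        exact mul_le_mul_of_nonneg_left (erf_bound x) (by norm_num)) 0
    have : IntegrableOn (fun t => erf t * Real.exp (-(t - b) ^ 2)
        + erf t * Real.exp (-(t - -b) ^ 2) - (2 * erf t) * Real.exp (-(t - 0) ^ 2))
        (Set.Ioi (0:ℝ)) := (h1.add h2).sub h3
    refine this.congr_fun (fun t _ => ?_) measurableSet_Ioi
    simp only [hf1]
    ring_nf
  have hint2 : IntegrableOn f2 (Set.Ioi (0:ℝ)) := by
    set M : ℝ := c * ∫ u : ℝ, Real.exp (-u ^ 2) with hM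
    have hb : ∀ x : ℝ, |2 * erf x - erf (x - b) - erf (x + b)| ≤ 4 * M := by
      intro x
      have h1 := erf_bound x
      have h2 := erf_bound (x - b)
      have h3 := erf_bound (x + b)
      calc |2 * erf x - erf (x - b) - erf (x + b)|
          ≤ |2 * erf x - erf (x - b)| + |erf (x + b)| := abs_sub _ _
        _ ≤ |2 * erf x| + |erf (x - b)| + |erf (x + b)| := by
            exact add_le_add_left (abs_sub _ _) _
        _ ≤ 2 * M + M + M := by
            refine add_le_add (add_le_add ?_ h2) h3
            rw [abs_mul, abs_two]
            exact mul_le_mul_of_nonneg_left h1 (by norm_num)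
        _ = 4 * M := by ring
    have := bdd_mul_gauss_integrableOn (fun t => 2 * erf t - erf (t - b) - erf (t + b))
      (((continuous_const.mul erf_continuous).sub (erf_continuous.comp (by continuity))).sub
        (erf_continuous.comp (by continuity))) (4 * M) hb 0
    refine this.congr_fun (fun t _ => ?_) measurableSet_Ioi
    simp only [hf2]
    ring_nf
  have hFtend : Filter.Tendsto F Filter.atTop (nhds 0) := by
    set L : ℝ := c * ∫ u in Set.Ioi (0:ℝ), Real.exp (-u ^ 2) with hL
    have h0 : Filter.Tendsto erf Filter.atTop (nhds L) := erf_tendsto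
    have hm : Filter.Tendsto (fun t => erf (t - b)) Filter.atTop (nhds L) := by
      simpa [sub_eq_add_neg] using erf_shift_tendsto (-b)
    have hp : Filter.Tendsto (fun t => erf (t + b)) Filter.atTop (nhds L) :=
      erf_shift_tendsto b
    have h4 : Filter.Tendsto F Filter.atTop
        (nhds ((1 / c) * (L * (2 * L - L - L)))) :=
      (h0.mul (((h0.const_mul 2).sub hm).sub hp)).const_mul (1 / c)
    have : (1 / c) * (L * (2 * L - L - L)) = 0 := by ring
    rwa [this] at h4
  have hFTC := integral_Ioi_of_hasDerivAt_of_tendsto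
    (f := F) (f' := fun t => f2 t - f1 t) (a := 0) (m := 0)
    (hderiv 0).continuousAt.continuousWithinAt
    (fun x _ => hderiv x) (hint2.sub hint1) hFtend
  have hF0 : F 0 = 0 := by simp [hF, erf_zero]
  rw [hF0, sub_zero] at hFTC
  have hsub : ∫ t in Set.Ioi (0:ℝ), (f2 t - f1 t)
      = (∫ t in Set.Ioi (0:ℝ), f2 t) - ∫ t in Set.Ioi (0:ℝ), f1 t :=
    integral_sub hint2 hint1
  have : (∫ t in Set.Ioi (0:ℝ), f2 t) - ∫ t in Set.Ioi (0:ℝ), f1 t = 0 := by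
    rw [← hsub]; exact hFTC
  linarith [this]

/-- For every `a : ℝ`,
`∫_0^∞ (e^{-(x-a)²/2} + e^{-(x+a)²/2} - 2e^{-x²/2}) · Erf(x/√2) dx
  = √2 · ∫_0^∞ e^{-t²} (2 Erf(t) - Erf(t - a/√2) - Erf(t + a/√2)) dt`. -/
theorem stmt_14 (a : ℝ) :
    ∫ x in Set.Ioi (0:ℝ),
        (Real.exp (-(x - a) ^ 2 / 2) + Real.exp (-(x + a) ^ 2 / 2)
            - 2 * Real.exp (-x ^ 2 / 2)) * erf (x / Real.sqrt 2)
      = Real.sqrt 2 * ∫ t in Set.Ioi (0:ℝ),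
          Real.exp (-t ^ 2) *
            (2 * erf t - erf (t - a / Real.sqrt 2) - erf (t + a / Real.sqrt 2)) := by
  have hs2 : (0:ℝ) < Real.sqrt 2 := by positivity
  have hsq : Real.sqrt 2 ^ 2 = 2 := Real.sq_sqrt (by norm_num)
  have hkey2 : ∀ y : ℝ, -(Real.sqrt 2 * y) ^ 2 / 2 = -y ^ 2 := fun y => by
    rw [mul_pow, hsq]; ring
  set g : ℝ → ℝ := fun x =>
    (Real.exp (-(x - a) ^ 2 / 2) + Real.exp (-(x + a) ^ 2 / 2)
      - 2 * Real.exp (-x ^ 2 / 2)) * erf (x / Real.sqrt 2) with hg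
  have hsubst : (∫ x in Set.Ioi (0:ℝ), g (Real.sqrt 2 * x))
      = (Real.sqrt 2)⁻¹ • ∫ x in Set.Ioi ((Real.sqrt 2) * 0), g x :=
    integral_comp_mul_left_Ioi g 0 hs2
  have hgval : ∀ x : ℝ, g (Real.sqrt 2 * x)
      = (Real.exp (-(x - a / Real.sqrt 2) ^ 2) + Real.exp (-(x + a / Real.sqrt 2) ^ 2)
          - 2 * Real.exp (-x ^ 2)) * erf x := by
    intro x
    have h1 : Real.sqrt 2 * x / Real.sqrt 2 = x := by field_simp
    have e2 : Real.sqrt 2 * x - a = Real.sqrt 2 * (x - a / Real.sqrt 2) := by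
      field_simp
    have e3 : Real.sqrt 2 * x + a = Real.sqrt 2 * (x + a / Real.sqrt 2) := by
      field_simp
    have h2 : -(Real.sqrt 2 * x - a) ^ 2 / 2 = -(x - a / Real.sqrt 2) ^ 2 := by
      rw [e2, hkey2]
    have h3 : -(Real.sqrt 2 * x + a) ^ 2 / 2 = -(x + a / Real.sqrt 2) ^ 2 := by
      rw [e3, hkey2]
    have h4 : -(Real.sqrt 2 * x) ^ 2 / 2 = -x ^ 2 := hkey2 x
    simp only [hg, h1, h2, h3, h4]
  have hkey := key (a / Real.sqrt 2)
  calc ∫ x in Set.Ioi (0:ℝ), g x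
      = Real.sqrt 2 * ∫ x in Set.Ioi (0:ℝ), g (Real.sqrt 2 * x) := by
        rw [hsubst]
        simp only [mul_zero, smul_eq_mul]
        rw [← mul_assoc, mul_inv_cancel₀ (ne_of_gt hs2), one_mul]
    _ = Real.sqrt 2 * ∫ x in Set.Ioi (0:ℝ),
          (Real.exp (-(x - a / Real.sqrt 2) ^ 2) + Real.exp (-(x + a / Real.sqrt 2) ^ 2)
            - 2 * Real.exp (-x ^ 2)) * erf x := by
        congr 1
        exact setIntegral_congr_fun measurableSet_Ioi (fun x _ => hgval x)
    _ = Real.sqrt 2 * ∫ t in Set.Ioi (0:ℝ),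
          Real.exp (-t ^ 2) *
            (2 * erf t - erf (t - a / Real.sqrt 2) - erf (t + a / Real.sqrt 2)) := by
        rw [hkey]
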